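/- arXiv:2504.09360 — 2 statements merged into one kernel-verified Lean document; each statement's English description precedes it below -/
import Mathlib

section
/- For any unitary U on N qubits, the average linear operator entanglement over uniformly random Pauli strings satisfies P_E(U) := (1/d²) Σ_{P} E_lin(U† P U) = 1 − d^{-2} Tr( T^A_{(12)(34)} · (U†)^{⊗4} Q U^{⊗4} ), where Q = d^{-2} Σ_P P^{⊗4} and the sum runs over all d² = 4^N Pauli strings P (with +1 phase), d = 2^N. -/
open Matrix Kronecker

/-- The four single-qubit Pauli matrices `I, X, Y, Z`. -/
noncomputable def pauli : Fin 4 → Matrix (Fin 2) (Fin 2) ℂ :=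
  ![1, !![0, 1; 1, 0], !![0, -Complex.I; Complex.I, 0], !![1, 0; 0, -1]]

/-- A Pauli string: the tensor product over the sites `i : ι` of the single-qubit
Pauli matrices `pauli (a i)`. -/
noncomputable def pauliString {ι : Type*} [Fintype ι] (a : ι → Fin 4) :
    Matrix (ι → Fin 2) (ι → Fin 2) ℂ :=
  Matrix.of fun x y => ∏ i, pauli (a i) (x i) (y i)
/-- The partial swap `T^A₁₂` on the doubled space, swapping the two copies of
subsystem `A` and acting as the identity on the two copies of `B`. -/
noncomputable def swapA (α β : Type*) [DecidableEq α] [DecidableEq β] :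
    Matrix ((α × β) × (α × β)) ((α × β) × (α × β)) ℂ :=
  Matrix.of fun p q =>
    if p.1.1 = q.2.1 ∧ p.2.1 = q.1.1 ∧ p.1.2 = q.1.2 ∧ p.2.2 = q.2.2 then 1 else 0

/-- The linear operator entanglement
`E_lin(O) = 1 - d⁻² Tr(T^A₁₂ O^{⊗2} T^A₁₂ (O†)^{⊗2})`, `d = dim(H_A ⊗ H_B)`. -/
noncomputable def ElinC {α β : Type*} [Fintype α] [Fintype β] [DecidableEq α] [DecidableEq β]
    (O : Matrix (α × β) (α × β) ℂ) : ℂ :=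
  1 - (((Fintype.card α : ℂ) * (Fintype.card β : ℂ)) ^ 2)⁻¹ *
    (swapA α β * (O ⊗ₖ O) * swapA α β * (Oᴴ ⊗ₖ Oᴴ)).trace
/-- An `N = N_A + N_B` qubit Pauli string, written as a product operator across the
bipartition into the first `N_A` and the last `N_B` qubits. -/
noncomputable def pauliP {NA NB : ℕ} (a : Fin NA → Fin 4) (b : Fin NB → Fin 4) :
    Matrix ((Fin NA → Fin 2) × (Fin NB → Fin 2)) ((Fin NA → Fin 2) × (Fin NB → Fin 2)) ℂ :=
  pauliString a ⊗ₖ pauliString b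

/-- A Clifford unitary on `N = N_A + N_B` qubits: a unitary mapping every Pauli string
to a Pauli string up to a sign, under conjugation. -/
def IsCliffordP {NA NB : ℕ}
    (C : Matrix ((Fin NA → Fin 2) × (Fin NB → Fin 2)) ((Fin NA → Fin 2) × (Fin NB → Fin 2)) ℂ) :
    Prop :=
  C ∈ Matrix.unitaryGroup ((Fin NA → Fin 2) × (Fin NB → Fin 2)) ℂ ∧
    ∀ (a : Fin NA → Fin 4) (b : Fin NB → Fin 4),
      ∃ (a' : Fin NA → Fin 4) (b' : Fin NB → Fin 4) (s : ℂ), (s = 1 ∨ s = -1) ∧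
        C * pauliP a b * Cᴴ = s • pauliP a' b'

/-- The fourth tensor (Kronecker) power of an operator, on the quadrupled space. -/
noncomputable def tpow4 {γ : Type*} (M : Matrix γ γ ℂ) :
    Matrix ((γ × γ) × (γ × γ)) ((γ × γ) × (γ × γ)) ℂ :=
  (M ⊗ₖ M) ⊗ₖ (M ⊗ₖ M)

/-- The projector `Q = d⁻² Σ_P P^{⊗4}`, summing over all `4^N` Pauli strings
(`+1` phase), `d = 2^N`, `N = N_A + N_B`. -/
noncomputable def Qproj (NA NB : ℕ) :
    Matrix ((((Fin NA → Fin 2) × (Fin NB → Fin 2)) × ((Fin NA → Fin 2) × (Fin NB → Fin 2))) ×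
            (((Fin NA → Fin 2) × (Fin NB → Fin 2)) × ((Fin NA → Fin 2) × (Fin NB → Fin 2))))
           ((((Fin NA → Fin 2) × (Fin NB → Fin 2)) × ((Fin NA → Fin 2) × (Fin NB → Fin 2))) ×
            (((Fin NA → Fin 2) × (Fin NB → Fin 2)) × ((Fin NA → Fin 2) × (Fin NB → Fin 2)))) ℂ :=
  (((2 : ℂ) ^ (NA + NB)) ^ 2)⁻¹ •
    ∑ a : Fin NA → Fin 4, ∑ b : Fin NB → Fin 4, tpow4 (pauliP a b)


section Helpers

open Finset

def pz : Fin 4 → Fin 2 → Fin 2 → GaussianInt :=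
  ![fun i j => if i = j then 1 else 0,
    fun i j => if i = j then 0 else 1,
    fun i j => if i = j then 0 else (if i = 0 then -⟨0,1⟩ else ⟨0,1⟩),
    fun i j => if i = j then (if i = 0 then 1 else -1) else 0]

lemma pauli_eq_pz (k : Fin 4) (i j : Fin 2) :
    pauli k i j = GaussianInt.toComplex (pz k i j) := by
  fin_cases k <;> fin_cases i <;> fin_cases j <;>
    simp [pauli, pz, Matrix.one_apply, GaussianInt.toComplex_def]

lemma pauli_conj (k : Fin 4) (i j : Fin 2) :
    (starRingEnd ℂ) (pauli k i j) = pauli k j i := by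
  fin_cases k <;> fin_cases i <;> fin_cases j <;>
    simp [pauli, Matrix.one_apply]

lemma site_id (c1 c2 c3 c4 d1 d2 d3 d4 : Fin 2) :
    ∑ k : Fin 4, pauli k c1 d1 * pauli k c2 d2 * pauli k c3 d3 * pauli k c4 d4
    = ∑ k : Fin 4, pauli k c3 d1 * pauli k c4 d2 * pauli k c1 d3 * pauli k c2 d4 := by
  have h : ∀ e1 e2 e3 e4 f1 f2 f3 f4 : Fin 2,
      ∑ k : Fin 4, pz k e1 f1 * pz k e2 f2 * pz k e3 f3 * pz k e4 f4
      = ∑ k : Fin 4, pz k e3 f1 * pz k e4 f2 * pz k e1 f3 * pz k e2 f4 := by decide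
  have := congrArg GaussianInt.toComplex (h c1 c2 c3 c4 d1 d2 d3 d4)
  simpa [pauli_eq_pz, map_sum, _root_.map_mul] using this

lemma string_id {ι : Type*} [Fintype ι] [DecidableEq ι] (c1 c2 c3 c4 d1 d2 d3 d4 : ι → Fin 2) :
    ∑ a : ι → Fin 4, pauliString a c1 d1 * pauliString a c2 d2 *
        pauliString a c3 d3 * pauliString a c4 d4
    = ∑ a : ι → Fin 4, pauliString a c3 d1 * pauliString a c4 d2 *
        pauliString a c1 d3 * pauliString a c2 d4 := by
  have key : ∀ e1 e2 e3 e4 f1 f2 f3 f4 : ι → Fin 2,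
      ∑ a : ι → Fin 4, pauliString a e1 f1 * pauliString a e2 f2 *
          pauliString a e3 f3 * pauliString a e4 f4
      = ∏ i, ∑ k : Fin 4,
          pauli k (e1 i) (f1 i) * pauli k (e2 i) (f2 i) *
            pauli k (e3 i) (f3 i) * pauli k (e4 i) (f4 i) := by
    intro e1 e2 e3 e4 f1 f2 f3 f4
    rw [Fintype.prod_sum]
    refine Finset.sum_congr rfl fun a _ => ?_
    simp only [pauliString, Matrix.of_apply, ← Finset.prod_mul_distrib]
  rw [key, key]
  exact Finset.prod_congr rfl fun i _ => site_id _ _ _ _ _ _ _ _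

lemma pauliString_conjTranspose {ι : Type*} [Fintype ι] (a : ι → Fin 4) :
    (pauliString a)ᴴ = pauliString a := by
  ext x y
  simp only [Matrix.conjTranspose_apply, pauliString, Matrix.of_apply, star_prod,
    Complex.star_def]
  exact Finset.prod_congr rfl fun i _ => pauli_conj _ _ _

lemma kronecker_conjTranspose' {p q : Type*} (A : Matrix p p ℂ) (B : Matrix q q ℂ) :
    (A ⊗ₖ B)ᴴ = Aᴴ ⊗ₖ Bᴴ := by
  ext x y
  simp only [Matrix.conjTranspose_apply, Matrix.kroneckerMap_apply, star_mul']

lemma pauliP_conjTranspose {NA NB : ℕ} (a : Fin NA → Fin 4) (b : Fin NB → Fin 4) :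
    (pauliP a b)ᴴ = pauliP a b := by
  rw [pauliP, kronecker_conjTranspose', pauliString_conjTranspose, pauliString_conjTranspose]

lemma pairP_id {NA NB : ℕ}
    (c1 c2 c3 c4 d1 d2 d3 d4 : (Fin NA → Fin 2) × (Fin NB → Fin 2)) :
    ∑ i : (Fin NA → Fin 4) × (Fin NB → Fin 4),
        pauliP i.1 i.2 c1 d1 * pauliP i.1 i.2 c2 d2 *
          pauliP i.1 i.2 c3 d3 * pauliP i.1 i.2 c4 d4
    = ∑ i : (Fin NA → Fin 4) × (Fin NB → Fin 4),
        pauliP i.1 i.2 c3 d1 * pauliP i.1 i.2 c4 d2 *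
          pauliP i.1 i.2 c1 d3 * pauliP i.1 i.2 c2 d4 := by
  have expand : ∀ (e1 e2 e3 e4 f1 f2 f3 f4 : (Fin NA → Fin 2) × (Fin NB → Fin 2)),
      ∑ i : (Fin NA → Fin 4) × (Fin NB → Fin 4),
          pauliP i.1 i.2 e1 f1 * pauliP i.1 i.2 e2 f2 *
            pauliP i.1 i.2 e3 f3 * pauliP i.1 i.2 e4 f4
      = (∑ a : Fin NA → Fin 4, pauliString a e1.1 f1.1 * pauliString a e2.1 f2.1 *
            pauliString a e3.1 f3.1 * pauliString a e4.1 f4.1) *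
        (∑ b : Fin NB → Fin 4, pauliString b e1.2 f1.2 * pauliString b e2.2 f2.2 *
            pauliString b e3.2 f3.2 * pauliString b e4.2 f4.2) := by
    intro e1 e2 e3 e4 f1 f2 f3 f4
    rw [Fintype.sum_mul_sum]
    rw [Fintype.sum_prod_type]
    refine Finset.sum_congr rfl fun a _ => Finset.sum_congr rfl fun b _ => ?_
    simp only [pauliP, Matrix.kroneckerMap_apply]
    ring
  rw [expand, expand, string_id c1.1 c2.1 c3.1 c4.1 d1.1 d2.1 d3.1 d4.1,
    string_id c1.2 c2.2 c3.2 c4.2 d1.2 d2.2 d3.2 d4.2]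

variable {m : Type*} [Fintype m]

lemma sum_rot3 (f : m → m → m → ℂ) :
    ∑ z : m, ∑ w : m, ∑ y : m, f z w y = ∑ y : m, ∑ z : m, ∑ w : m, f z w y :=
  (Finset.sum_congr rfl fun _ _ => Finset.sum_comm).trans Finset.sum_comm

lemma trace2 (M A : Matrix m m ℂ) :
    (M * A).trace = ∑ x : m, ∑ y : m, M x y * A y x := by
  simp [Matrix.trace, Matrix.mul_apply, Matrix.diag]

lemma trace4 (M A : Matrix m m ℂ) :
    (M * A * M * A).trace
      = ∑ q : (m × m) × (m × m),
          M q.1.1 q.1.2 * A q.1.2 q.2.1 * M q.2.1 q.2.2 * A q.2.2 q.1.1 := by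
  rw [show M * A * M * A = (M * A) * (M * A) from mul_assoc (M*A) M A, trace2]
  simp only [Matrix.mul_apply, Finset.sum_mul, Finset.mul_sum, Fintype.sum_prod_type]
  refine Finset.sum_congr rfl fun x _ => ?_
  rw [sum_rot3 (f := fun z w y => M x y * A y z * (M z w * A w x))]
  refine Finset.sum_congr rfl fun y _ => Finset.sum_congr rfl fun z _ =>
    Finset.sum_congr rfl fun w _ => ?_
  ring

lemma trace2sq (M A : Matrix m m ℂ) :
    ((M * A).trace) ^ 2
      = ∑ q : (m × m) × (m × m),
          M q.1.1 q.1.2 * A q.1.2 q.1.1 * M q.2.1 q.2.2 * A q.2.2 q.2.1 := by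
  rw [pow_two, trace2, Finset.sum_mul_sum]
  simp only [Finset.sum_mul, Finset.mul_sum, Fintype.sum_prod_type]
  refine Finset.sum_congr rfl fun x _ => ?_
  rw [sum_rot3 (f := fun z w y => M x y * A y x * (M z w * A w z))]
  refine Finset.sum_congr rfl fun y _ => Finset.sum_congr rfl fun z _ =>
    Finset.sum_congr rfl fun w _ => ?_
  ring

lemma key' {ι : Type*} [Fintype ι] (M : ι → Matrix m m ℂ) (A : Matrix m m ℂ)
    (hM : ∀ x y z w : m, (∑ i, M i x y * M i z w) = ∑ i, M i z y * M i x w) :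
    ∑ i, (M i * A * M i * A).trace = ∑ i, ((M i * A).trace) ^ 2 := by
  simp only [trace4, trace2sq]
  rw [Finset.sum_comm, Finset.sum_comm (γ := ι)
    (f := fun i (q : (m × m) × (m × m)) =>
      M i q.1.1 q.1.2 * A q.1.2 q.1.1 * M i q.2.1 q.2.2 * A q.2.2 q.2.1)]
  have lhs_eq : ∀ q : (m × m) × (m × m),
      (∑ i, M i q.1.1 q.1.2 * A q.1.2 q.2.1 * M i q.2.1 q.2.2 * A q.2.2 q.1.1)
        = (∑ i, M i q.2.1 q.1.2 * M i q.1.1 q.2.2) * (A q.1.2 q.2.1 * A q.2.2 q.1.1) := by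
    intro q
    rw [← hM, Finset.sum_mul]
    exact Finset.sum_congr rfl fun i _ => by ring
  have rhs_eq : ∀ q : (m × m) × (m × m),
      (∑ i, M i q.1.1 q.1.2 * A q.1.2 q.1.1 * M i q.2.1 q.2.2 * A q.2.2 q.2.1)
        = (∑ i, M i q.1.1 q.1.2 * M i q.2.1 q.2.2) * (A q.1.2 q.1.1 * A q.2.2 q.2.1) := by
    intro q
    rw [Finset.sum_mul]
    exact Finset.sum_congr rfl fun i _ => by ring
  simp only [lhs_eq, rhs_eq]
  let e : (m × m) × (m × m) ≃ (m × m) × (m × m) :=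
    ⟨fun q => ((q.2.1, q.1.2), (q.1.1, q.2.2)), fun q => ((q.2.1, q.1.2), (q.1.1, q.2.2)),
      fun q => rfl, fun q => rfl⟩
  rw [← Equiv.sum_comp e (fun q : (m × m) × (m × m) =>
      (∑ i, M i q.1.1 q.1.2 * M i q.2.1 q.2.2) * (A q.1.2 q.1.1 * A q.2.2 q.2.1))]
  refine Finset.sum_congr rfl fun q _ => rfl

lemma trace_conj4 (T W V P : Matrix m m ℂ) :
    (T * (W * P * V) * T * (W * P * V)).trace = (P * (V * T * W) * P * (V * T * W)).trace := by
  rw [show T * (W * P * V) * T * (W * P * V) = (T * W) * (P * (V * T * W) * P * V) by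
        noncomm_ring,
      Matrix.trace_mul_comm,
      show P * (V * T * W) * P * V * (T * W) = P * (V * T * W) * P * (V * T * W) by noncomm_ring]

lemma trace_conj2 (T W V P : Matrix m m ℂ) :
    (T * (W * P * V)).trace = (P * (V * T * W)).trace := by
  rw [show T * (W * P * V) = (T * W) * (P * V) by noncomm_ring,
      Matrix.trace_mul_comm,
      show P * V * (T * W) = P * (V * T * W) by noncomm_ring]

lemma tpow4_mul3 {n : Type*} [Fintype n] (X P Y : Matrix n n ℂ) :
    tpow4 X * tpow4 P * tpow4 Y = tpow4 (X * P * Y) := by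
  simp only [tpow4, ← Matrix.mul_kronecker_mul]

end Helpers

set_option maxHeartbeats 1000000 in
/-- the average linear operator entanglement of Heisenberg-evolved
Pauli strings (the Pauli-entangling power) equals
`1 − d⁻² Tr(T^A₍₁₂₎₍₃₄₎ (U†)^{⊗4} Q U^{⊗4})`, where `T^A₍₁₂₎₍₃₄₎ = T^A₁₂ ⊗ T^A₃₄`
permutes the four `A`-factors by `(12)(34)`. -/
theorem pauli_entangling_power_formula {NA NB : ℕ}
    (U : Matrix ((Fin NA → Fin 2) × (Fin NB → Fin 2))
      ((Fin NA → Fin 2) × (Fin NB → Fin 2)) ℂ)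
    (hU : U ∈ Matrix.unitaryGroup ((Fin NA → Fin 2) × (Fin NB → Fin 2)) ℂ) :
    ((4 : ℂ) ^ (NA + NB))⁻¹ *
        ∑ a : Fin NA → Fin 4, ∑ b : Fin NB → Fin 4, ElinC (Uᴴ * pauliP a b * U) =
      1 - (((2 : ℂ) ^ (NA + NB)) ^ 2)⁻¹ *
        ((swapA (Fin NA → Fin 2) (Fin NB → Fin 2) ⊗ₖ swapA (Fin NA → Fin 2) (Fin NB → Fin 2)) *
          (tpow4 Uᴴ * Qproj NA NB * tpow4 U)).trace := by
  classical
  have hUl : Uᴴ * U = 1 := by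
    simpa [Matrix.star_eq_conjTranspose] using hU.1
  set T := swapA (Fin NA → Fin 2) (Fin NB → Fin 2) with hT
  set Amat := (U ⊗ₖ U) * T * (Uᴴ ⊗ₖ Uᴴ) with hAmat
  have hcard : ((Fintype.card (Fin NA → Fin 2) : ℂ) * (Fintype.card (Fin NB → Fin 2) : ℂ)) ^ 2
      = (((2 : ℂ) ^ (NA + NB)) ^ 2) := by
    simp only [Fintype.card_fun, Fintype.card_fin]
    push_cast
    rw [← pow_add]
  -- step 1: rewrite each ElinC term
  have hOkron : ∀ (a : Fin NA → Fin 4) (b : Fin NB → Fin 4),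
      (Uᴴ * pauliP a b * U) ⊗ₖ (Uᴴ * pauliP a b * U)
        = (Uᴴ ⊗ₖ Uᴴ) * (pauliP a b ⊗ₖ pauliP a b) * (U ⊗ₖ U) := by
    intro a b
    rw [Matrix.mul_kronecker_mul, Matrix.mul_kronecker_mul]
  have elin_eq : ∀ (a : Fin NA → Fin 4) (b : Fin NB → Fin 4),
      ElinC (Uᴴ * pauliP a b * U)
        = 1 - ((((2 : ℂ) ^ (NA + NB)) ^ 2))⁻¹ *
            ((pauliP a b ⊗ₖ pauliP a b) * Amat * (pauliP a b ⊗ₖ pauliP a b) * Amat).trace := by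
    intro a b
    have hOH : (Uᴴ * pauliP a b * U)ᴴ = Uᴴ * pauliP a b * U := by
      simp [Matrix.conjTranspose_mul, pauliP_conjTranspose, Matrix.mul_assoc]
    rw [ElinC, hOH, hcard, hOkron a b, trace_conj4]
  -- step 2: rewrite the Q side
  have hQ : tpow4 Uᴴ * Qproj NA NB * tpow4 U
      = (((2 : ℂ) ^ (NA + NB)) ^ 2)⁻¹ •
          ∑ a : Fin NA → Fin 4, ∑ b : Fin NB → Fin 4, tpow4 (Uᴴ * pauliP a b * U) := by
    rw [Qproj, Matrix.mul_smul, Matrix.smul_mul]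
    congr 1
    rw [Finset.mul_sum, Finset.sum_mul]
    refine Finset.sum_congr rfl fun a _ => ?_
    rw [Finset.mul_sum, Finset.sum_mul]
    exact Finset.sum_congr rfl fun b _ => tpow4_mul3 _ _ _
  have hQtrace : ((T ⊗ₖ T) * (tpow4 Uᴴ * Qproj NA NB * tpow4 U)).trace
      = (((2 : ℂ) ^ (NA + NB)) ^ 2)⁻¹ *
          ∑ a : Fin NA → Fin 4, ∑ b : Fin NB → Fin 4,
            (((pauliP a b ⊗ₖ pauliP a b) * Amat).trace) ^ 2 := by
    rw [hQ, Matrix.mul_smul, Matrix.trace_smul, smul_eq_mul]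
    congr 1
    rw [Finset.mul_sum, Matrix.trace_sum]
    refine Finset.sum_congr rfl fun a _ => ?_
    rw [Finset.mul_sum, Matrix.trace_sum]
    refine Finset.sum_congr rfl fun b _ => ?_
    have h1 : (T ⊗ₖ T) * tpow4 (Uᴴ * pauliP a b * U)
        = (T * ((Uᴴ ⊗ₖ Uᴴ) * (pauliP a b ⊗ₖ pauliP a b) * (U ⊗ₖ U)))
            ⊗ₖ (T * ((Uᴴ ⊗ₖ Uᴴ) * (pauliP a b ⊗ₖ pauliP a b) * (U ⊗ₖ U))) := by
      rw [tpow4, hOkron a b, ← Matrix.mul_kronecker_mul]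
    rw [h1, Matrix.trace_kronecker, trace_conj2, ← hAmat, pow_two]
  -- step 3: the key combinatorial identity
  have hkey : (∑ a : Fin NA → Fin 4, ∑ b : Fin NB → Fin 4,
        ((pauliP a b ⊗ₖ pauliP a b) * Amat * (pauliP a b ⊗ₖ pauliP a b) * Amat).trace)
      = ∑ a : Fin NA → Fin 4, ∑ b : Fin NB → Fin 4,
          (((pauliP a b ⊗ₖ pauliP a b) * Amat).trace) ^ 2 := by
    have hM : ∀ x y z w : ((Fin NA → Fin 2) × (Fin NB → Fin 2)) ×
        ((Fin NA → Fin 2) × (Fin NB → Fin 2)),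
        (∑ i : (Fin NA → Fin 4) × (Fin NB → Fin 4),
          (pauliP i.1 i.2 ⊗ₖ pauliP i.1 i.2) x y * (pauliP i.1 i.2 ⊗ₖ pauliP i.1 i.2) z w)
        = ∑ i : (Fin NA → Fin 4) × (Fin NB → Fin 4),
          (pauliP i.1 i.2 ⊗ₖ pauliP i.1 i.2) z y * (pauliP i.1 i.2 ⊗ₖ pauliP i.1 i.2) x w := by
      intro x y z w
      simp only [Matrix.kroneckerMap_apply]
      calc ∑ i : (Fin NA → Fin 4) × (Fin NB → Fin 4),
            pauliP i.1 i.2 x.1 y.1 * pauliP i.1 i.2 x.2 y.2 *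
              (pauliP i.1 i.2 z.1 w.1 * pauliP i.1 i.2 z.2 w.2)
        = ∑ i : (Fin NA → Fin 4) × (Fin NB → Fin 4),
            pauliP i.1 i.2 x.1 y.1 * pauliP i.1 i.2 x.2 y.2 *
              pauliP i.1 i.2 z.1 w.1 * pauliP i.1 i.2 z.2 w.2 :=
          Finset.sum_congr rfl fun i _ => by ring
      _ = ∑ i : (Fin NA → Fin 4) × (Fin NB → Fin 4),
            pauliP i.1 i.2 z.1 y.1 * pauliP i.1 i.2 z.2 y.2 *
              pauliP i.1 i.2 x.1 w.1 * pauliP i.1 i.2 x.2 w.2 :=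
          pairP_id x.1 x.2 z.1 z.2 y.1 y.2 w.1 w.2
      _ = ∑ i : (Fin NA → Fin 4) × (Fin NB → Fin 4),
            pauliP i.1 i.2 z.1 y.1 * pauliP i.1 i.2 z.2 y.2 *
              (pauliP i.1 i.2 x.1 w.1 * pauliP i.1 i.2 x.2 w.2) :=
          Finset.sum_congr rfl fun i _ => by ring
    exact (Fintype.sum_prod_type (f := fun i : (Fin NA → Fin 4) × (Fin NB → Fin 4) =>
        ((pauliP i.1 i.2 ⊗ₖ pauliP i.1 i.2) * Amat * (pauliP i.1 i.2 ⊗ₖ pauliP i.1 i.2) *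
          Amat).trace)).symm.trans
      ((key' (fun i : (Fin NA → Fin 4) × (Fin NB → Fin 4) =>
          pauliP i.1 i.2 ⊗ₖ pauliP i.1 i.2) Amat hM).trans
        (Fintype.sum_prod_type (f := fun i : (Fin NA → Fin 4) × (Fin NB → Fin 4) =>
          (((pauliP i.1 i.2 ⊗ₖ pauliP i.1 i.2) * Amat).trace) ^ 2)))
  -- final arithmetic
  rw [hQtrace]
  simp only [elin_eq]
  rw [Finset.sum_congr rfl fun a (_ : a ∈ Finset.univ) => Finset.sum_sub_distrib _ _,
      Finset.sum_sub_distrib]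
  simp only [Finset.sum_const, Finset.card_univ, Fintype.card_fun, Fintype.card_fin,
    nsmul_eq_mul, mul_one, ← Finset.mul_sum]
  rw [hkey]
  have h2 : ((2 : ℂ) ^ (NA + NB)) ^ 2 = (4 : ℂ) ^ (NA + NB) := by
    rw [← pow_mul, mul_comm, pow_mul]
    norm_num
  have h4 : ((4 : ℂ) ^ (NA + NB)) ≠ 0 := pow_ne_zero _ (by norm_num)
  have hcast : ((4 ^ NA : ℕ) : ℂ) * ((4 ^ NB : ℕ) : ℂ) = (4 : ℂ) ^ (NA + NB) := by
    push_cast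
    rw [pow_add]
  rw [hcast, h2]
  field_simp
end

section
/- The Pauli-entangling power is invariant under Clifford post-processing and local pre-processing: for any unitary U on N qubits, local unitaries V_A on the first N_A qubits and V_B on the remaining N_B qubits, and any Clifford unitary C, P_E(C · U · (V_A ⊗ V_B)) = P_E(U). -/
open Matrix Kronecker

/-- The Pauli-entangling power: the average linear operator entanglement generated by
`U` on Heisenberg-evolved Pauli strings, the average running over all `4^N` Pauli
strings with `+1` phase (`N = N_A + N_B`). -/
noncomputable def PEC {NA NB : ℕ}
    (U : Matrix ((Fin NA → Fin 2) × (Fin NB → Fin 2))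
      ((Fin NA → Fin 2) × (Fin NB → Fin 2)) ℂ) : ℂ :=
  ((4 : ℂ) ^ (NA + NB))⁻¹ *
    ∑ a : Fin NA → Fin 4, ∑ b : Fin NB → Fin 4, ElinC (Uᴴ * pauliP a b * U)

/-! ### Auxiliary lemmas -/

lemma kron_conjT {l m n p : Type*} (A : Matrix l m ℂ) (B : Matrix n p ℂ) :
    (A ⊗ₖ B)ᴴ = Aᴴ ⊗ₖ Bᴴ := by
  ext x y
  simp [conjTranspose_apply, mul_comm]

/-- The permutation underlying `swapA`. -/
def sA {α β : Type*} (p : (α × β) × (α × β)) : (α × β) × (α × β) :=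
  ((p.2.1, p.1.2), (p.1.1, p.2.2))

lemma swapA_apply {α β : Type*} [DecidableEq α] [DecidableEq β] (p q : (α × β) × (α × β)) :
    swapA α β p q = if q = sA p then 1 else 0 := by
  simp only [swapA, of_apply, sA, Prod.ext_iff]
  congr 1
  simp only [eq_iff_iff]
  constructor
  · rintro ⟨h1, h2, h3, h4⟩; exact ⟨⟨h2.symm, h3.symm⟩, h1.symm, h4.symm⟩
  · rintro ⟨⟨h1, h2⟩, h3, h4⟩; exact ⟨h3.symm, h1.symm, h2.symm, h4.symm⟩

lemma swapA_apply' {α β : Type*} [DecidableEq α] [DecidableEq β] (p q : (α × β) × (α × β)) :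
    swapA α β p q = if p = sA q then 1 else 0 := by
  simp only [swapA, of_apply, sA, Prod.ext_iff]
  congr 1
  simp only [eq_iff_iff]
  constructor
  · rintro ⟨h1, h2, h3, h4⟩; exact ⟨⟨h1, h3⟩, h2, h4⟩
  · rintro ⟨⟨h1, h2⟩, h3, h4⟩; exact ⟨h1, h3, h2, h4⟩

lemma swapA_mul_apply {α β : Type*} [Fintype α] [Fintype β] [DecidableEq α] [DecidableEq β]
    (M : Matrix ((α × β) × (α × β)) ((α × β) × (α × β)) ℂ) (p q) :
    (swapA α β * M) p q = M (sA p) q := by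
  simp [mul_apply, swapA_apply, eq_comm]

lemma mul_swapA_apply {α β : Type*} [Fintype α] [Fintype β] [DecidableEq α] [DecidableEq β]
    (M : Matrix ((α × β) × (α × β)) ((α × β) × (α × β)) ℂ) (p q) :
    (M * swapA α β) p q = M p (sA q) := by
  simp [mul_apply, swapA_apply', eq_comm]

/-- `swapA` commutes with doubled local operators. -/
lemma swapA_comm_kron {α β : Type*} [Fintype α] [Fintype β] [DecidableEq α] [DecidableEq β]
    (A : Matrix α α ℂ) (B : Matrix β β ℂ) :
    swapA α β * ((A ⊗ₖ B) ⊗ₖ (A ⊗ₖ B)) = ((A ⊗ₖ B) ⊗ₖ (A ⊗ₖ B)) * swapA α β := by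
  ext p q
  rw [swapA_mul_apply, mul_swapA_apply]
  simp only [kroneckerMap_apply, sA]
  ring

lemma alg_helper {M : Type*} [Monoid M] (T K X Y K' X' Y' : M)
    (hTX : T * X = X * T) (hTY : T * Y = Y * T)
    (hY : Y * Y' = 1) :
    T * (X * K * Y) * T * (Y' * K' * X') = X * (T * K * T * K') * X' := by
  calc T * (X * K * Y) * T * (Y' * K' * X')
      = (T * X) * K * (Y * T * Y') * K' * X' := by simp only [mul_assoc]
    _ = (X * T) * K * (T * (Y * Y')) * K' * X' := by rw [hTX, ← hTY]; simp only [mul_assoc]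
    _ = X * (T * K * T * K') * X' := by rw [hY, mul_one]; simp only [mul_assoc]

lemma trace_helper {n : Type*} [Fintype n] [DecidableEq n] (T K X Y : Matrix n n ℂ)
    (hTX : T * X = X * T) (hTY : T * Y = Y * T)
    (hX : Xᴴ * X = 1) (hY : Y * Yᴴ = 1) :
    (T * (X * K * Y) * T * (X * K * Y)ᴴ).trace = (T * K * T * Kᴴ).trace := by
  have h2 : (X * K * Y)ᴴ = Yᴴ * Kᴴ * Xᴴ := by
    rw [conjTranspose_mul, conjTranspose_mul, mul_assoc]
  rw [h2, alg_helper T K X Y Kᴴ Xᴴ Yᴴ hTX hTY hY, trace_mul_comm, ← mul_assoc, hX, one_mul]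

lemma neg_kron_neg {l m n p : Type*} (A : Matrix l m ℂ) (B : Matrix n p ℂ) :
    (-A) ⊗ₖ (-B) = A ⊗ₖ B := by
  ext x y; simp [kroneckerMap_apply]

/-- `E_lin` is invariant under a sign. -/
lemma ElinC_smul_sign {α β : Type*} [Fintype α] [Fintype β] [DecidableEq α] [DecidableEq β]
    (s : ℂ) (hs : s = 1 ∨ s = -1) (O : Matrix (α × β) (α × β) ℂ) :
    ElinC (s • O) = ElinC O := by
  rcases hs with h | h <;> subst h
  · simp
  · have h1 : ((-1 : ℂ) • O) = -O := by simp
    unfold ElinC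
    rw [h1, conjTranspose_neg, neg_kron_neg, neg_kron_neg]

/-- `E_lin` is invariant under multiplication by local unitaries. -/
lemma ElinC_local {α β : Type*} [Fintype α] [Fintype β] [DecidableEq α] [DecidableEq β]
    (O : Matrix (α × β) (α × β) ℂ)
    (XA YA : Matrix α α ℂ) (XB YB : Matrix β β ℂ)
    (hXA : XA ∈ Matrix.unitaryGroup α ℂ) (hXB : XB ∈ Matrix.unitaryGroup β ℂ)
    (hYA : YA ∈ Matrix.unitaryGroup α ℂ) (hYB : YB ∈ Matrix.unitaryGroup β ℂ) :
    ElinC ((XA ⊗ₖ XB) * O * (YA ⊗ₖ YB)) = ElinC O := by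
  unfold ElinC
  refine congrArg (fun t => 1 - (((Fintype.card α : ℂ) * (Fintype.card β : ℂ)) ^ 2)⁻¹ * t) ?_
  rw [← kron_conjT, ← kron_conjT, Matrix.mul_kronecker_mul, Matrix.mul_kronecker_mul]
  have hXu : ((XA ⊗ₖ XB) ⊗ₖ (XA ⊗ₖ XB))ᴴ * ((XA ⊗ₖ XB) ⊗ₖ (XA ⊗ₖ XB)) = 1 := by
    rw [kron_conjT, ← Matrix.mul_kronecker_mul, kron_conjT, ← Matrix.mul_kronecker_mul,
      ← Matrix.star_eq_conjTranspose XA, ← Matrix.star_eq_conjTranspose XB,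
      Matrix.mem_unitaryGroup_iff'.mp hXA, Matrix.mem_unitaryGroup_iff'.mp hXB,
      Matrix.one_kronecker_one, Matrix.one_kronecker_one]
  have hYu : ((YA ⊗ₖ YB) ⊗ₖ (YA ⊗ₖ YB)) * ((YA ⊗ₖ YB) ⊗ₖ (YA ⊗ₖ YB))ᴴ = 1 := by
    rw [kron_conjT, ← Matrix.mul_kronecker_mul, kron_conjT, ← Matrix.mul_kronecker_mul,
      ← Matrix.star_eq_conjTranspose YA, ← Matrix.star_eq_conjTranspose YB,
      Matrix.mem_unitaryGroup_iff.mp hYA, Matrix.mem_unitaryGroup_iff.mp hYB,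
      Matrix.one_kronecker_one, Matrix.one_kronecker_one]
  exact trace_helper (swapA α β) (O ⊗ₖ O) ((XA ⊗ₖ XB) ⊗ₖ (XA ⊗ₖ XB)) ((YA ⊗ₖ YB) ⊗ₖ (YA ⊗ₖ YB))
    (swapA_comm_kron XA XB) (swapA_comm_kron YA YB) hXu hYu

lemma pauli_ortho (i j : Fin 4) :
    ∑ x : Fin 2, ∑ y : Fin 2, pauli i x y * star (pauli j x y) = if i = j then 2 else 0 := by
  fin_cases i <;> fin_cases j <;>
    simp [pauli, Fin.sum_univ_two, Matrix.one_apply, Complex.ext_iff] <;> norm_num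

lemma trace_pauliString_mul {ι : Type*} [Fintype ι] [DecidableEq ι] (a c : ι → Fin 4) :
    (pauliString a * (pauliString c)ᴴ).trace = ∏ i, (if a i = c i then (2 : ℂ) else 0) := by
  classical
  have step : (pauliString a * (pauliString c)ᴴ).trace
      = ∑ p : ι → Fin 2, ∑ q : ι → Fin 2,
          ∏ i, (pauli (a i) (p i) (q i) * star (pauli (c i) (p i) (q i))) := by
    simp only [Matrix.trace, Matrix.diag_apply, Matrix.mul_apply, Matrix.conjTranspose_apply,
      pauliString, Matrix.of_apply, star_prod, Finset.prod_mul_distrib]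
  rw [step]
  have step2 : ∀ p : ι → Fin 2,
      (∑ q : ι → Fin 2, ∏ i, (pauli (a i) (p i) (q i) * star (pauli (c i) (p i) (q i))))
      = ∏ i, ∑ v : Fin 2, (pauli (a i) (p i) v * star (pauli (c i) (p i) v)) := by
    intro p
    rw [Fintype.prod_sum]
  simp only [step2]
  have step3 : (∑ p : ι → Fin 2, ∏ i, ∑ v : Fin 2, pauli (a i) (p i) v * star (pauli (c i) (p i) v))
      = ∏ i, ∑ u : Fin 2, ∑ v : Fin 2, pauli (a i) u v * star (pauli (c i) u v) :=
    (Fintype.prod_sum fun i u => ∑ v : Fin 2, pauli (a i) u v * star (pauli (c i) u v)).symm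
  rw [step3]
  congr 1
  funext i
  rw [pauli_ortho]

lemma trace_pauliP_mul {NA NB : ℕ} (a c : Fin NA → Fin 4) (b d : Fin NB → Fin 4) :
    (pauliP a b * (pauliP c d)ᴴ).trace
      = (∏ i, if a i = c i then (2 : ℂ) else 0) * (∏ j, if b j = d j then (2 : ℂ) else 0) := by
  rw [pauliP, pauliP, kron_conjT, ← Matrix.mul_kronecker_mul, Matrix.trace_kronecker,
    trace_pauliString_mul, trace_pauliString_mul]

/-- Distinct Pauli strings are not proportional. -/
lemma pauliP_smul_inj {NA NB : ℕ} (a c : Fin NA → Fin 4) (b d : Fin NB → Fin 4) (s : ℂ)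
    (hs : s ≠ 0) (h : pauliP a b = s • pauliP c d) : a = c ∧ b = d := by
  have htr : (pauliP a b * (pauliP c d)ᴴ).trace
      = s * ((pauliP c d * (pauliP c d)ᴴ).trace) := by
    rw [h, Matrix.smul_mul, Matrix.trace_smul]; simp
  rw [trace_pauliP_mul, trace_pauliP_mul] at htr
  simp only [if_pos rfl, Finset.prod_const, if_true] at htr
  have hne : (∏ i, if a i = c i then (2 : ℂ) else 0)
      * (∏ j, if b j = d j then (2 : ℂ) else 0) ≠ 0 := by
    rw [htr]
    exact mul_ne_zero hs (by norm_num)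
  constructor
  · funext i
    by_contra hic
    apply hne
    have h0 : (if a i = c i then (2 : ℂ) else 0) = 0 := if_neg hic
    rw [Finset.prod_eq_zero (Finset.mem_univ i) h0, zero_mul]
  · funext j
    by_contra hic
    apply hne
    have h0 : (if b j = d j then (2 : ℂ) else 0) = 0 := if_neg hic
    rw [Finset.prod_eq_zero (Finset.mem_univ j) h0, mul_zero]

set_option maxHeartbeats 1600000 in
/-- the Pauli-entangling power is invariant under Clifford
post-processing and local unitary pre-processing:
`P_E(C · U · (V_A ⊗ V_B)) = P_E(U)`. -/
theorem PEC_invariance {NA NB : ℕ}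
    (U C : Matrix ((Fin NA → Fin 2) × (Fin NB → Fin 2))
      ((Fin NA → Fin 2) × (Fin NB → Fin 2)) ℂ)
    (hU : U ∈ Matrix.unitaryGroup ((Fin NA → Fin 2) × (Fin NB → Fin 2)) ℂ)
    (VA : Matrix (Fin NA → Fin 2) (Fin NA → Fin 2) ℂ)
    (VB : Matrix (Fin NB → Fin 2) (Fin NB → Fin 2) ℂ)
    (hVA : VA ∈ Matrix.unitaryGroup (Fin NA → Fin 2) ℂ)
    (hVB : VB ∈ Matrix.unitaryGroup (Fin NB → Fin 2) ℂ)
    (hC : IsCliffordP C) :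
    PEC (C * U * (VA ⊗ₖ VB)) = PEC U := by
  classical
  obtain ⟨hCU, hmap⟩ := hC
  choose fa fb fs hsgn hconj using hmap
  have hCC' : Cᴴ * C = 1 := by
    rw [← Matrix.star_eq_conjTranspose]
    exact Matrix.mem_unitaryGroup_iff'.mp hCU
  have hs2 : ∀ (x : Fin NA → Fin 4) (y : Fin NB → Fin 4), fs x y * fs x y = 1 := by
    intro x y
    rcases hsgn x y with h | h <;> rw [h] <;> norm_num
  -- key conjugation identity in the convenient direction
  have key : ∀ (x : Fin NA → Fin 4) (y : Fin NB → Fin 4),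
      Cᴴ * pauliP (fa x y) (fb x y) * C = fs x y • pauliP x y := by
    intro x y
    have h := hconj x y
    have h2 : Cᴴ * (C * pauliP x y * Cᴴ) * C
        = Cᴴ * (fs x y • pauliP (fa x y) (fb x y)) * C := by rw [h]
    have hL : Cᴴ * (C * pauliP x y * Cᴴ) * C = pauliP x y := by
      calc Cᴴ * (C * pauliP x y * Cᴴ) * C
          = (Cᴴ * C) * (pauliP x y * (Cᴴ * C)) := by simp only [Matrix.mul_assoc]
        _ = pauliP x y := by rw [hCC', one_mul, mul_one]
    have hR : Cᴴ * (fs x y • pauliP (fa x y) (fb x y)) * C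
        = fs x y • (Cᴴ * pauliP (fa x y) (fb x y) * C) := by
      simp only [Matrix.mul_smul, Matrix.smul_mul]
    have hP : pauliP x y = fs x y • (Cᴴ * pauliP (fa x y) (fb x y) * C) := by
      rw [← hR, ← h2, hL]
    rw [hP, smul_smul, hs2, one_smul]
  -- the Clifford map on Pauli labels is bijective
  set φ : ((Fin NA → Fin 4) × (Fin NB → Fin 4)) → ((Fin NA → Fin 4) × (Fin NB → Fin 4)) :=
    fun p => (fa p.1 p.2, fb p.1 p.2) with hφ
  have hinj : Function.Injective φ := by
    intro p q hpq
    have h1 := key p.1 p.2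
    have h2 := key q.1 q.2
    have hfa : fa p.1 p.2 = fa q.1 q.2 := congrArg Prod.fst hpq
    have hfb : fb p.1 p.2 = fb q.1 q.2 := congrArg Prod.snd hpq
    rw [hfa, hfb, h2] at h1
    -- h1 : fs q • pauliP q = fs p • pauliP p
    have hPeq : pauliP p.1 p.2 = (fs p.1 p.2 * fs q.1 q.2) • pauliP q.1 q.2 := by
      have := congrArg (fun M => fs p.1 p.2 • M) h1
      simp only [smul_smul, hs2, one_smul] at this
      rw [← this, mul_comm, ← smul_smul]
    have hsne : fs p.1 p.2 * fs q.1 q.2 ≠ 0 := by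
      intro h0
      have := hs2 p.1 p.2
      rcases hsgn p.1 p.2 with h | h <;> rcases hsgn q.1 q.2 with h' | h' <;>
        rw [h, h'] at h0 <;> norm_num at h0
    obtain ⟨hA, hB⟩ := pauliP_smul_inj p.1 q.1 p.2 q.2 _ hsne hPeq
    exact Prod.ext hA hB
  have hbij : Function.Bijective φ := Finite.injective_iff_bijective.mp hinj
  -- unitarity of the local factors
  have hVA' : VAᴴ ∈ Matrix.unitaryGroup (Fin NA → Fin 2) ℂ := by
    rw [← Matrix.star_eq_conjTranspose]; exact Unitary.star_mem hVA
  have hVB' : VBᴴ ∈ Matrix.unitaryGroup (Fin NB → Fin 2) ℂ := by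
    rw [← Matrix.star_eq_conjTranspose]; exact Unitary.star_mem hVB
  -- now compare the sums
  unfold PEC
  refine congrArg (fun t => ((4 : ℂ) ^ (NA + NB))⁻¹ * t) ?_
  have reindex : ∀ g : (Fin NA → Fin 4) → (Fin NB → Fin 4) → ℂ,
      (∑ x : Fin NA → Fin 4, ∑ y : Fin NB → Fin 4, g x y)
        = ∑ p : (Fin NA → Fin 4) × (Fin NB → Fin 4), g p.1 p.2 := by
    intro g
    exact (Fintype.sum_prod_type (f := fun p => g p.1 p.2)).symm
  rw [reindex, reindex]
  set W := VA ⊗ₖ VB with hW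
  calc (∑ p : (Fin NA → Fin 4) × (Fin NB → Fin 4),
        ElinC ((C * U * W)ᴴ * pauliP p.1 p.2 * (C * U * W)))
      = ∑ p : (Fin NA → Fin 4) × (Fin NB → Fin 4),
          ElinC ((C * U * W)ᴴ * pauliP (φ p).1 (φ p).2 * (C * U * W)) :=
        (hbij.sum_comp fun p => ElinC ((C * U * W)ᴴ * pauliP p.1 p.2 * (C * U * W))).symm
    _ = ∑ p : (Fin NA → Fin 4) × (Fin NB → Fin 4), ElinC (Uᴴ * pauliP p.1 p.2 * U) := by
        apply Finset.sum_congr rfl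
        intro p _
        have hexp : (C * U * W)ᴴ * pauliP (φ p).1 (φ p).2 * (C * U * W)
            = fs p.1 p.2 • ((VAᴴ ⊗ₖ VBᴴ) * (Uᴴ * pauliP p.1 p.2 * U) * (VA ⊗ₖ VB)) := by
          calc (C * U * W)ᴴ * pauliP (φ p).1 (φ p).2 * (C * U * W)
              = Wᴴ * (Uᴴ * (Cᴴ * pauliP (fa p.1 p.2) (fb p.1 p.2) * C) * U) * W := by
                simp only [conjTranspose_mul, Matrix.mul_assoc, hφ]
            _ = Wᴴ * (Uᴴ * (fs p.1 p.2 • pauliP p.1 p.2) * U) * W := by rw [key p.1 p.2]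
            _ = fs p.1 p.2 • ((VAᴴ ⊗ₖ VBᴴ) * (Uᴴ * pauliP p.1 p.2 * U) * (VA ⊗ₖ VB)) := by
                rw [hW, kron_conjT]
                simp only [Matrix.mul_smul, Matrix.smul_mul]
        rw [hexp, ElinC_smul_sign _ (hsgn p.1 p.2),
          ElinC_local (Uᴴ * pauliP p.1 p.2 * U) VAᴴ VA VBᴴ VB hVA' hVB' hVA hVB]
end
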